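/- Let C be a nonzero cyclic code of length n over R = F_q + uF_q, and let C_u = {b(x) ∈ F_q[x]/⟨x^n − 1⟩ : u·b(x) ∈ C}, which is a nonzero cyclic code of length n over F_q. Then the minimum Hamming distances coincide: d_H(C) = d_H(C_u). -/

import Mathlib

open Polynomial

noncomputable section

/-- The ambient ring `S[x]/(x^n - 1)`. -/
abbrev Amb (S : Type) [CommRing S] (n : ℕ) : Type := AdjoinRoot (X ^ n - 1 : S[X])

/-- The image of a polynomial `f ∈ S[x]` in `S[x]/(x^n - 1)`. -/
def toAmb (S : Type) [CommRing S] (n : ℕ) (f : S[X]) : Amb S n := AdjoinRoot.mk _ f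

lemma root_pow_sub_one (S : Type) [CommRing S] (n : ℕ) :
    (AdjoinRoot.root (X ^ n - 1 : S[X])) ^ n - 1 = 0 := by
  have h : (AdjoinRoot.mk (X ^ n - 1 : S[X])) (X ^ n - 1 : S[X]) = 0 := AdjoinRoot.mk_self
  simpa [map_sub, map_pow, AdjoinRoot.mk_X] using h

/-- The ring hom `S[x]/(x^n-1) → T[x]/(x^n-1)` induced by `φ : S →+* T`. -/
def liftAmb {S T : Type} [CommRing S] [CommRing T] (n : ℕ) (φ : S →+* T) :
    Amb S n →+* Amb T n :=
  AdjoinRoot.lift ((AdjoinRoot.of _).comp φ) (AdjoinRoot.root _) (by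
    have h := root_pow_sub_one T n
    simp [eval₂_sub, eval₂_pow, eval₂_one, eval₂_X, h])

/-- Reduction mod `u`: the homomorphism `π : R_n → F_q[x]/(x^n-1)` induced by
the projection `F_q + uF_q → F_q`. -/
def redMod (F : Type) [Field F] (n : ℕ) : Amb (DualNumber F) n →+* Amb F n :=
  liftAmb n (TrivSqZeroExt.fstHom F F F).toRingHom

/-- The inclusion `F_q[x]/(x^n-1) → R_n` induced by `F_q ⊆ F_q + uF_q`. -/
def emb (F : Type) [Field F] (n : ℕ) : Amb F n →+* Amb (DualNumber F) n :=
  liftAmb n (algebraMap F (DualNumber F))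

/-- The element `u` of `R_n = (F_q + uF_q)[x]/(x^n-1)`. -/
def uE (F : Type) [Field F] (n : ℕ) : Amb (DualNumber F) n :=
  AdjoinRoot.of _ (DualNumber.eps : DualNumber F)

/-- The torsion code `Tor(C) = {r ∈ F_q[x]/(x^n-1) : u·r ∈ C}` of a cyclic code
`C ⊆ R_n`. -/
def Tor (F : Type) [Field F] (n : ℕ) (C : Ideal (Amb (DualNumber F) n)) : Set (Amb F n) :=
  {r | uE F n * emb F n r ∈ C}

/-- A set of codewords (identified with residue classes in `S[x]/(x^n-1)`) is
reversible if, for each codeword with coefficient vector `(c_0, …, c_{n-1})`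
(i.e. each representative of degree `< n`), the reversed word `(c_{n-1}, …, c_0)`
is again a codeword.  Here `Polynomial.reflect (n-1)` realizes the reversal of
the coefficient vector of a polynomial of degree `< n`. -/
def ReversibleCode (S : Type) [CommRing S] (n : ℕ) (D : Set (Amb S n)) : Prop :=
  ∀ f : S[X], f.degree < (n : ℕ) → toAmb S n f ∈ D →
    toAmb S n (f.reflect (n - 1)) ∈ D

/-- The Euclidean dual code of a code `C ⊆ S[x]/(x^n-1)`: all residue classes whose
coefficient vector (of the degree `< n` representative) is orthogonal to the
coefficient vector of every codeword of `C`. -/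
def dualCode (S : Type) [CommRing S] (n : ℕ) (C : Set (Amb S n)) : Set (Amb S n) :=
  {w | ∀ wp : S[X], wp.degree < (n : ℕ) → toAmb S n wp = w →
    ∀ cp : S[X], cp.degree < (n : ℕ) → toAmb S n cp ∈ C →
      ∑ i ∈ Finset.range n, wp.coeff i * cp.coeff i = 0}

/-- The minimum Hamming distance of a code `C ⊆ S[x]/(x^n-1)`: the least Hamming
weight of (the coefficient vector of) a nonzero codeword. -/
def dH (S : Type) [CommRing S] (n : ℕ) (C : Set (Amb S n)) : ℕ :=
  sInf {d | ∃ cp : S[X], cp.degree < (n : ℕ) ∧ cp ≠ 0 ∧ toAmb S n cp ∈ C ∧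
    cp.support.card = d}

end


noncomputable section AuxProofs

open Polynomial TrivSqZeroExt

variable {F : Type} [Field F] {n : ℕ}

lemma liftAmb_mk' {S T : Type} [CommRing S] [CommRing T] (n : ℕ) (φ : S →+* T) (f : S[X]) :
    liftAmb n φ (toAmb S n f) = toAmb T n (f.map φ) := by
  show AdjoinRoot.lift _ _ _ (AdjoinRoot.mk _ f) = AdjoinRoot.mk _ (f.map φ)
  rw [AdjoinRoot.lift_mk, ← AdjoinRoot.aeval_eq, aeval_def, AdjoinRoot.algebraMap_eq, eval₂_map]

/-- the "second coordinate" polynomial of a polynomial over the dual numbers -/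
def sndPoly (f : (DualNumber F)[X]) : F[X] :=
  ⟨⟨f.toFinsupp.coeff.mapRange TrivSqZeroExt.snd TrivSqZeroExt.snd_zero⟩⟩

lemma sndPoly_coeff (f : (DualNumber F)[X]) (i : ℕ) :
    (sndPoly f).coeff i = (f.coeff i).snd := by
  rcases f with ⟨f⟩
  simp [sndPoly, coeff_ofFinsupp, Finsupp.mapRange_apply]

lemma eps_mul_inl (s : F) :
    (DualNumber.eps : DualNumber F) * TrivSqZeroExt.inl s = TrivSqZeroExt.inr s := by
  show TrivSqZeroExt.inr (1 : F) * TrivSqZeroExt.inl s = _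
  rw [TrivSqZeroExt.inr_mul_inl]
  simp

/-- the first-coordinate polynomial -/
def fstPoly (f : (DualNumber F)[X]) : F[X] := f.map (TrivSqZeroExt.fstHom F F F).toRingHom

lemma fstPoly_coeff (f : (DualNumber F)[X]) (i : ℕ) :
    (fstPoly f).coeff i = (f.coeff i).fst := by
  simp [fstPoly, coeff_map]

/-- embedding of `F[X]` into `(DualNumber F)[X]` -/
def inlPoly (b : F[X]) : (DualNumber F)[X] := b.map (algebraMap F (DualNumber F))

lemma inlPoly_coeff (b : F[X]) (i : ℕ) :
    (inlPoly b).coeff i = TrivSqZeroExt.inl (b.coeff i) := by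
  simp only [inlPoly, coeff_map]
  rfl

lemma eps_inl_coeff (b : F[X]) (i : ℕ) :
    (C DualNumber.eps * inlPoly b).coeff i = TrivSqZeroExt.inr (b.coeff i) := by
  rw [coeff_C_mul, inlPoly_coeff, eps_mul_inl]

lemma inr_eq_zero_iff (s : F) : (TrivSqZeroExt.inr s : DualNumber F) = 0 ↔ s = 0 := by
  constructor
  · intro h
    have := congrArg TrivSqZeroExt.snd h
    simpa [TrivSqZeroExt.snd_inr] using this
  · rintro rfl; simp

lemma support_eps_inl (b : F[X]) :
    (C DualNumber.eps * inlPoly b).support = b.support := by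
  ext i
  simp only [mem_support_iff, eps_inl_coeff, ne_eq, inr_eq_zero_iff]

lemma decomp (f : (DualNumber F)[X]) :
    f = inlPoly (fstPoly f) + C DualNumber.eps * inlPoly (sndPoly f) := by
  refine Polynomial.ext fun i => ?_
  rw [coeff_add, inlPoly_coeff, eps_inl_coeff, fstPoly_coeff, sndPoly_coeff,
    TrivSqZeroExt.inl_fst_add_inr_snd_eq]

lemma uE_mul_toAmb (f : (DualNumber F)[X]) :
    uE F n * toAmb (DualNumber F) n f = toAmb (DualNumber F) n (C DualNumber.eps * f) := by
  show AdjoinRoot.of _ _ * AdjoinRoot.mk _ f = AdjoinRoot.mk _ (C DualNumber.eps * f)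
  rw [map_mul]
  rfl

lemma emb_toAmb (b : F[X]) : emb F n (toAmb F n b) = toAmb (DualNumber F) n (inlPoly b) :=
  liftAmb_mk' n _ b

lemma uE_emb_toAmb (b : F[X]) :
    uE F n * emb F n (toAmb F n b) = toAmb (DualNumber F) n (C DualNumber.eps * inlPoly b) := by
  rw [emb_toAmb, uE_mul_toAmb]

/-- From a codeword of `C` produce a codeword of `Tor C` of no larger weight. -/
lemma main_step (I : Ideal (Amb (DualNumber F) n)) (f : (DualNumber F)[X])
    (hf : toAmb (DualNumber F) n f ∈ I) (hd : f.degree < (n : ℕ)) (hne : f ≠ 0) :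
    ∃ b : F[X], b.degree < (n : ℕ) ∧ b ≠ 0 ∧ toAmb F n b ∈ Tor F n I ∧
      b.support.card ≤ f.support.card := by
  by_cases ha : fstPoly f = 0
  · -- f = C eps * inlPoly (sndPoly f)
    have hdec : f = C DualNumber.eps * inlPoly (sndPoly f) := by
      conv_lhs => rw [decomp f]
      rw [ha]
      simp [inlPoly]
    refine ⟨sndPoly f, ?_, ?_, ?_, ?_⟩
    · rw [degree_lt_iff_coeff_zero] at hd ⊢
      intro m hm
      rw [sndPoly_coeff, hd m hm, TrivSqZeroExt.snd_zero]
    · intro h0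
      apply hne
      rw [hdec, h0]
      simp [inlPoly]
    · show uE F n * emb F n (toAmb F n (sndPoly f)) ∈ I
      rw [uE_emb_toAmb, ← hdec]
      exact hf
    · apply Finset.card_le_card
      intro i hi
      rw [mem_support_iff] at hi ⊢
      intro h0
      exact hi (by rw [sndPoly_coeff, h0, TrivSqZeroExt.snd_zero])
  · refine ⟨fstPoly f, ?_, ha, ?_, ?_⟩
    · rw [degree_lt_iff_coeff_zero] at hd ⊢
      intro m hm
      rw [fstPoly_coeff, hd m hm, TrivSqZeroExt.fst_zero]
    · show uE F n * emb F n (toAmb F n (fstPoly f)) ∈ I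
      rw [uE_emb_toAmb]
      have : C DualNumber.eps * inlPoly (fstPoly f) = C DualNumber.eps * f := by
        conv_rhs => rw [decomp f]
        rw [mul_add, ← mul_assoc, ← C_mul, DualNumber.eps_mul_eps, map_zero, zero_mul, add_zero]
      rw [this, ← uE_mul_toAmb]
      exact I.mul_mem_left _ hf
    · apply Finset.card_le_card
      intro i hi
      rw [mem_support_iff] at hi ⊢
      intro h0
      exact hi (by rw [fstPoly_coeff, h0, TrivSqZeroExt.fst_zero])

/-- From a codeword of `Tor C` produce a codeword of `C` of the same weight. -/
lemma tor_to_C (I : Ideal (Amb (DualNumber F) n)) (b : F[X])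
    (hb : toAmb F n b ∈ Tor F n I) (hd : b.degree < (n : ℕ)) (hne : b ≠ 0) :
    ∃ f : (DualNumber F)[X], f.degree < (n : ℕ) ∧ f ≠ 0 ∧ toAmb (DualNumber F) n f ∈ I ∧
      f.support.card = b.support.card := by
  refine ⟨C DualNumber.eps * inlPoly b, ?_, ?_, ?_, by rw [support_eps_inl]⟩
  · rw [degree_lt_iff_coeff_zero] at hd ⊢
    intro m hm
    rw [eps_inl_coeff, hd m hm]
    simp
  · intro h0
    apply hne
    ext i
    have := congrArg (fun p => Polynomial.coeff p i) h0
    simp only [eps_inl_coeff, coeff_zero] at this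
    rw [inr_eq_zero_iff] at this
    simpa using this
  · rw [← uE_emb_toAmb]
    exact hb

lemma toAmb_ne_zero (hn : 0 < n) (b : F[X]) (hd : b.degree < (n : ℕ)) (hne : b ≠ 0) :
    toAmb F n b ≠ 0 := by
  intro h
  rw [toAmb, AdjoinRoot.mk_eq_zero] at h
  have h1 : (X ^ n - 1 : F[X]).degree ≤ b.degree := degree_le_of_dvd h hne
  have h2 : (X ^ n - 1 : F[X]).degree = (n : ℕ) := by
    simpa using degree_X_pow_sub_C hn (1 : F)
  rw [h2] at h1
  exact absurd (lt_of_le_of_lt h1 hd) (lt_irrefl _)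

lemma exists_codeword (hn : 0 < n) (I : Ideal (Amb (DualNumber F) n)) (hI : I ≠ ⊥) :
    ∃ f : (DualNumber F)[X], f.degree < (n : ℕ) ∧ f ≠ 0 ∧ toAmb (DualNumber F) n f ∈ I := by
  obtain ⟨c, hcC, hc0⟩ := Submodule.exists_mem_ne_zero_of_ne_bot hI
  obtain ⟨f0, rfl⟩ := AdjoinRoot.mk_surjective (g := (X ^ n - 1 : (DualNumber F)[X])) c
  have hmon : (X ^ n - 1 : (DualNumber F)[X]).Monic := by
    simpa using monic_X_pow_sub_C (1 : DualNumber F) hn.ne'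
  refine ⟨f0 %ₘ (X ^ n - 1), ?_, ?_, ?_⟩
  · have := degree_modByMonic_lt f0 hmon
    have h2 : (X ^ n - 1 : (DualNumber F)[X]).degree = (n : ℕ) := by
      simpa using degree_X_pow_sub_C hn (1 : DualNumber F)
    rwa [h2] at this
  · intro h0
    apply hc0
    rw [modByMonic_eq_sub_mul_div f0 _] at h0
    have : f0 = (X ^ n - 1) * (f0 /ₘ (X ^ n - 1)) := by
      have := sub_eq_zero.mp h0
      linear_combination this
    rw [this]
    simp [AdjoinRoot.mk_eq_zero, map_mul]
  · have : toAmb (DualNumber F) n (f0 %ₘ (X ^ n - 1)) = AdjoinRoot.mk _ f0 := by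
      rw [toAmb, modByMonic_eq_sub_mul_div f0 _, map_sub, map_mul, AdjoinRoot.mk_self,
        zero_mul, sub_zero]
    rw [this]
    exact hcC

end AuxProofs

theorem stmt17' {F : Type} [Field F] [Fintype F] {n : ℕ} (hn : 0 < n)
    (C : Ideal (Amb (DualNumber F) n)) (hC : C ≠ ⊥) :
    (∃ r ∈ Tor F n C, r ≠ 0) ∧
      dH (DualNumber F) n ↑C = dH F n (Tor F n C) := by
  obtain ⟨f, hfd, hfne, hfC⟩ := exists_codeword hn C hC
  obtain ⟨b, hbd, hbne, hbT, hble⟩ := main_step C f hfC hfd hfne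
  constructor
  · exact ⟨toAmb F n b, hbT, toAmb_ne_zero hn b hbd hbne⟩
  · have hSCne : {d | ∃ cp : (DualNumber F)[X], cp.degree < (n : ℕ) ∧ cp ≠ 0 ∧
        toAmb (DualNumber F) n cp ∈ (↑C : Set _) ∧ cp.support.card = d}.Nonempty :=
      ⟨f.support.card, f, hfd, hfne, hfC, rfl⟩
    have hSTne : {d | ∃ cp : F[X], cp.degree < (n : ℕ) ∧ cp ≠ 0 ∧
        toAmb F n cp ∈ Tor F n C ∧ cp.support.card = d}.Nonempty :=
      ⟨b.support.card, b, hbd, hbne, hbT, rfl⟩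
    unfold dH
    apply le_antisymm
    · -- dH C ≤ dH Tor : each element of ST is in SC
      obtain ⟨b', hb'd, hb'ne, hb'T, hb'c⟩ := Nat.sInf_mem hSTne
      obtain ⟨f', hf'd, hf'ne, hf'C, hf'c⟩ := tor_to_C C b' hb'T hb'd hb'ne
      exact Nat.sInf_le ⟨f', hf'd, hf'ne, hf'C, by rw [hf'c, hb'c]⟩
    · -- dH Tor ≤ dH C
      obtain ⟨f', hf'd, hf'ne, hf'C, hf'c⟩ := Nat.sInf_mem hSCne
      obtain ⟨b', hb'd, hb'ne, hb'T, hb'le⟩ := main_step C f' hf'C hf'd hf'ne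
      calc dH F n (Tor F n C) ≤ b'.support.card := Nat.sInf_le ⟨b', hb'd, hb'ne, hb'T, rfl⟩
        _ ≤ f'.support.card := hb'le
        _ = dH (DualNumber F) n ↑C := hf'c

/-- for a nonzero cyclic code `C` over `R`, the torsion code
`C_u` is a nonzero code over `F_q` and `d_H(C) = d_H(C_u)`. -/
theorem stmt17 {F : Type} [Field F] [Fintype F] {n : ℕ} (hn : 0 < n)
    (C : Ideal (Amb (DualNumber F) n)) (hC : C ≠ ⊥) :
    (∃ r ∈ Tor F n C, r ≠ 0) ∧
      dH (DualNumber F) n ↑C = dH F n (Tor F n C) := stmt17' hn C hC
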